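/- Let m = 1 and consider the diffusion RLS under Assumptions A1, A2, A3. If Σ_{k=0}^∞ Σ_{i=1}^n φ_{k,i}² < +∞ (equivalently, the sequence Σ_{i=1}^n P_{k+1,i}^{-1} stays bounded), then there exist constants μ_1,…,μ_n > 0, determined only by the data {φ_{k,i}} and the matrix A, such that for every choice of initial estimates with Σ_{i=1}^n μ_i(θ_{0,i} − θ) ≠ 0, one has liminf_{k→∞} E‖Θ̃_k‖² > 0 and Θ̃_k does not converge to 0 in probability. -/

import Mathlib

open MeasureTheory Filter BigOperators Matrix
open Topology

namespace DiffRLS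

variable {n : ℕ}

/-- Products of the mean-propagation matrices `A D_{k-1} ⋯ A D_0`. -/
noncomputable def MM (A : Matrix (Fin n) (Fin n) ℝ) (r : ℕ → Fin n → ℝ) :
    ℕ → Fin n → Fin n → ℝ
  | 0 => fun i i' => if i = i' then 1 else 0
  | (k+1) => fun i i' => ∑ j, A i j * (r k j * MM A r k j i')

/-- Column sums of `MM`. -/
noncomputable def cc (A : Matrix (Fin n) (Fin n) ℝ) (r : ℕ → Fin n → ℝ) (k : ℕ) (i : Fin n) :
    ℝ := ∑ j, MM A r k j i

lemma MM_nonneg {A : Matrix (Fin n) (Fin n) ℝ} {r : ℕ → Fin n → ℝ}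
    (hA : ∀ i j, 0 ≤ A i j) (hr : ∀ k j, 0 ≤ r k j) :
    ∀ k i i', 0 ≤ MM A r k i i' := by
  intro k
  induction k with
  | zero => intro i i'; simp only [MM]; positivity
  | succ k ih =>
    intro i i'
    simp only [MM]
    exact Finset.sum_nonneg fun j _ =>
      mul_nonneg (hA i j) (mul_nonneg (hr k j) (ih j i'))

lemma cc_zero (A : Matrix (Fin n) (Fin n) ℝ) (r : ℕ → Fin n → ℝ) (i : Fin n) :
    cc A r 0 i = 1 := by
  simp [cc, MM]

lemma cc_succ {A : Matrix (Fin n) (Fin n) ℝ} (r : ℕ → Fin n → ℝ)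
    (hA_col : ∀ j, ∑ i, A i j = 1) (k : ℕ) (i : Fin n) :
    cc A r (k+1) i = ∑ j, r k j * MM A r k j i := by
  simp only [cc, MM]
  rw [Finset.sum_comm]
  congr 1
  ext j
  rw [← Finset.sum_mul, hA_col j, one_mul]

lemma cc_antitone {A : Matrix (Fin n) (Fin n) ℝ} {r : ℕ → Fin n → ℝ}
    (hA : ∀ i j, 0 ≤ A i j) (hA_col : ∀ j, ∑ i, A i j = 1)
    (hr0 : ∀ k j, 0 ≤ r k j) (hr1 : ∀ k j, r k j ≤ 1) :
    ∀ i, Antitone (fun k => cc A r k i) := by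
  intro i
  refine antitone_nat_of_succ_le fun k => ?_
  rw [cc_succ r hA_col]
  calc ∑ j, r k j * MM A r k j i ≤ ∑ j, MM A r k j i := by
        refine Finset.sum_le_sum fun j _ => ?_
        have := MM_nonneg hA hr0 k j i
        nlinarith [hr1 k j]
    _ = cc A r k i := rfl

lemma cc_lower {A : Matrix (Fin n) (Fin n) ℝ} {r : ℕ → Fin n → ℝ}
    (hA : ∀ i j, 0 ≤ A i j) (hA_col : ∀ j, ∑ i, A i j = 1)
    (hr0 : ∀ k j, 0 ≤ r k j) (hr1 : ∀ k j, r k j ≤ 1)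
    (k : ℕ) (i : Fin n) :
    (∏ j, r k j) * cc A r k i ≤ cc A r (k+1) i := by
  rw [cc_succ r hA_col, cc, Finset.mul_sum]
  refine Finset.sum_le_sum fun j _ => ?_
  have hM := MM_nonneg hA hr0 k j i
  have h1 : (∏ j', r k j') ≤ r k j := by
    calc (∏ j', r k j') = r k j * ∏ j' ∈ Finset.univ.erase j, r k j' := by
          rw [← Finset.mul_prod_erase Finset.univ _ (Finset.mem_univ j)]
      _ ≤ r k j * 1 := by
          refine mul_le_mul_of_nonneg_left ?_ (hr0 k j)
          exact Finset.prod_le_one (fun j' _ => hr0 k j') (fun j' _ => hr1 k j')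
      _ = r k j := mul_one _
  exact mul_le_mul_of_nonneg_right h1 hM

lemma abs_mul_le_half_sq (a b : ℝ) : |a * b| ≤ (a ^ 2 + b ^ 2) / 2 := by
  rw [abs_mul]
  nlinarith [two_mul_le_add_sq |a| |b|, sq_abs a, sq_abs b, abs_nonneg a, abs_nonneg b]

lemma sqrt_le_one_add (y : ℝ) (hy : 0 ≤ y) : Real.sqrt y ≤ 1 + y := by
  nlinarith [Real.sq_sqrt hy, Real.sqrt_nonneg y]

/-- Cauchy–Schwarz for convex combinations: `(∑ a u)² ≤ (∑ a) * ∑ a u²` for `a ≥ 0`. -/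
lemma sq_sum_mul_le {s : Finset (Fin n)} (a u : Fin n → ℝ) (ha : ∀ j, 0 ≤ a j) :
    (∑ j ∈ s, a j * u j) ^ 2 ≤ (∑ j ∈ s, a j) * ∑ j ∈ s, a j * u j ^ 2 := by
  have h := Finset.sum_mul_sq_le_sq_mul_sq s (fun j => Real.sqrt (a j))
    (fun j => Real.sqrt (a j) * u j)
  have h1 : ∀ j, Real.sqrt (a j) * (Real.sqrt (a j) * u j) = a j * u j := by
    intro j; rw [← mul_assoc, Real.mul_self_sqrt (ha j)]
  have h2 : ∀ j, Real.sqrt (a j) ^ 2 = a j := fun j => Real.sq_sqrt (ha j)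
  have h3 : ∀ j, (Real.sqrt (a j) * u j) ^ 2 = a j * u j ^ 2 := by
    intro j; rw [mul_pow, h2 j]
  simp only [h1, h2, h3] at h
  exact h

end DiffRLS

open DiffRLS ProbabilityTheory

set_option maxHeartbeats 2000000 in
/-- **Remark (necessity part of Theorem 1, scalar diffusion RLS).**
Under Assumptions A1, A2, A3 with `m = 1`: if `Σ_{k=0}^∞ Σ_{i=1}^n φ_{k,i}² < +∞`
(so the sums `Σ_i P_{k+1,i}⁻¹` stay bounded), then there are constants
`μ_1,…,μ_n > 0`, determined by the data `{φ_{k,i}}` and the matrix `A`, such that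
for every choice of initial estimates with `Σ_i μ_i (θ_{0,i} − θ) ≠ 0`, the diffusion
RLS error satisfies `liminf_k E‖Θ̃_k‖² > 0` and `Θ̃_k` does not converge to `0` in
probability. -/
theorem diffusion_RLS_scalar_divergence_necessity
    {n : ℕ} (hn : 1 ≤ n)
    (A : Matrix (Fin n) (Fin n) ℝ)
    (hA_nonneg : ∀ i j, 0 ≤ A i j)
    (hA_row : ∀ i, ∑ j, A i j = 1)
    (hA_col : ∀ j, ∑ i, A i j = 1)
    (hA_prim : ∃ K : ℕ, 1 ≤ K ∧ ∀ i j, 0 < (A ^ K) i j)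
    (hA_AtA_irred : ∀ i j, ∃ k : ℕ, 1 ≤ k ∧ 0 < ((Aᵀ * A) ^ k) i j)
    {Ω : Type} [MeasurableSpace Ω] (P : Measure Ω) [IsProbabilityMeasure P]
    (ε : ℕ → Fin n → Ω → ℝ)
    (hε_meas : ∀ k i, Measurable (ε k i))
    (hε_L2 : ∀ k i, MemLp (ε k i) 2 P)
    (hε_indep : ProbabilityTheory.iIndepFun
      (fun k => fun ω => fun i : Fin n => ε k i ω) P)
    (M : ℝ) (hM : 0 < M)
    (hε_mean : ∀ k i, ∫ ω, ε k i ω ∂P = 0)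
    (hε_var : ∀ k i, ∫ ω, (ε k i ω) ^ 2 ∂P < M)
    (θ : ℝ) (φ : ℕ → Fin n → ℝ)
    (hφ_sum : Summable (fun k => ∑ i, (φ k i) ^ 2)) :
    ∃ μ : Fin n → ℝ, (∀ i, 0 < μ i) ∧
      ∀ (θ0 : Fin n → ℝ) (θe : ℕ → Fin n → Ω → ℝ),
        (∀ i ω, θe 0 i ω = θ0 i) →
        (∀ k i ω, θe (k + 1) i ω =
          ∑ j, A i j * (θe k j ω +
            (φ k j / (1 + ∑ t ∈ Finset.range (k + 1), (φ t j) ^ 2)) *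
              ((θ * φ k j + ε k j ω) - θe k j ω * φ k j))) →
        (∑ i, μ i * (θ0 i - θ)) ≠ 0 →
        ((∃ δ : ℝ, 0 < δ ∧ ∀ᶠ k in atTop, δ ≤ ∫ ω, ∑ i, (θe k i ω - θ) ^ 2 ∂P) ∧
          ¬ TendstoInMeasure P
              (fun k ω => Real.sqrt (∑ i, (θe k i ω - θ) ^ 2)) atTop
              (fun _ => (0 : ℝ))) := by
  classical
  -- partial sums, gains, contraction ratios
  set S : ℕ → Fin n → ℝ := fun k j => ∑ t ∈ Finset.range k, φ t j ^ 2 with hS_def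
  have hS_nonneg : ∀ k j, 0 ≤ S k j := fun k j =>
    Finset.sum_nonneg fun t _ => sq_nonneg _
  have hS_pos : ∀ k j, 0 < 1 + S k j := fun k j => by linarith [hS_nonneg k j]
  have hS_succ : ∀ k j, S (k+1) j = S k j + φ k j ^ 2 := fun k j =>
    Finset.sum_range_succ _ _
  set r : ℕ → Fin n → ℝ := fun k j => (1 + S k j) / (1 + S (k+1) j) with hr_def
  set L : ℕ → Fin n → ℝ := fun k j => φ k j / (1 + S (k+1) j) with hL_def
  have hr0 : ∀ k j, 0 < r k j := fun k j => div_pos (hS_pos k j) (hS_pos (k+1) j)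
  have hr1 : ∀ k j, r k j ≤ 1 := fun k j => by
    rw [hr_def, div_le_one (hS_pos (k+1) j)]
    rw [hS_succ k j]; nlinarith [sq_nonneg (φ k j)]
  have hr0' : ∀ k j, 0 ≤ r k j := fun k j => (hr0 k j).le
  -- summability per node
  have hφ_each : ∀ j, Summable (fun k => φ k j ^ 2) := by
    intro j
    refine Summable.of_nonneg_of_le (fun k => sq_nonneg _) (fun k => ?_) hφ_sum
    exact Finset.single_le_sum (fun i _ => sq_nonneg (φ k i)) (Finset.mem_univ j)
  set Q : Fin n → ℝ := fun j => ∑' k, φ k j ^ 2 with hQ_def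
  have hQ_nonneg : ∀ j, 0 ≤ Q j := fun j => tsum_nonneg fun k => sq_nonneg _
  have hSQ : ∀ k j, S k j ≤ Q j := fun k j =>
    Summable.sum_le_tsum (Finset.range k) (fun t _ => sq_nonneg _) (hφ_each j)
  -- lower bound for the column sums
  have hcc_low : ∀ k i, (∏ j, (1 + S k j)⁻¹) ≤ cc A r k i := by
    intro k
    induction k with
    | zero =>
      intro i
      rw [cc_zero]
      have : ∀ j, (1 + S 0 j)⁻¹ = 1 := by
        intro j; simp [hS_def]
      simp [this]
    | succ k ih =>
      intro i
      refine le_trans ?_ (cc_lower hA_nonneg hA_col hr0' hr1 k i)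
      have hprod : (∏ j, (1 + S (k+1) j)⁻¹) = (∏ j, r k j) * ∏ j, (1 + S k j)⁻¹ := by
        rw [← Finset.prod_mul_distrib]
        refine Finset.prod_congr rfl fun j _ => ?_
        rw [hr_def]
        have := (hS_pos k j).ne'; have := (hS_pos (k+1) j).ne'
        field_simp
      rw [hprod]
      refine mul_le_mul_of_nonneg_left (ih i) ?_
      exact Finset.prod_nonneg fun j _ => hr0' k j
  set ρ : ℝ := ∏ j, (1 + Q j)⁻¹ with hρ_def
  have hρ_pos : 0 < ρ := Finset.prod_pos fun j _ => by
    have := hQ_nonneg j; positivity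
  have hρ_le : ∀ k i, ρ ≤ cc A r k i := by
    intro k i
    refine le_trans ?_ (hcc_low k i)
    refine Finset.prod_le_prod (fun j _ => by have := hQ_nonneg j; positivity) ?_
    intro j _
    exact inv_anti₀ (hS_pos k j) (by linarith [hSQ k j])
  -- the weights μ
  refine ⟨fun i => ⨅ k, cc A r k i, ?_, ?_⟩
  · intro i
    have : ρ ≤ ⨅ k, cc A r k i := le_ciInf fun k => hρ_le k i
    linarith [hρ_pos]
  intro θ0 θe h0 hrec hs
  set μ : Fin n → ℝ := fun i => ⨅ k, cc A r k i with hμ_def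
  have hμ_tendsto : ∀ i, Tendsto (fun k => cc A r k i) atTop (𝓝 (μ i)) := by
    intro i
    exact tendsto_atTop_ciInf (cc_antitone hA_nonneg hA_col hr0' hr1 i)
      ⟨ρ, fun x ⟨k, hk⟩ => hk ▸ hρ_le k i⟩
  -- error functions
  set e : ℕ → Fin n → Ω → ℝ := fun k i ω => θe k i ω - θ with he_def
  -- the error recursion
  have herec : ∀ k i ω, e (k+1) i ω = ∑ j, A i j * (r k j * e k j ω + L k j * ε k j ω) := by
    intro k i ω
    have hθ : θ = ∑ j, A i j * θ := by rw [← Finset.sum_mul, hA_row i, one_mul]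
    calc e (k+1) i ω = θe (k+1) i ω - θ := rfl
      _ = (∑ j, A i j * (θe k j ω +
            (φ k j / (1 + ∑ t ∈ Finset.range (k + 1), (φ t j) ^ 2)) *
              ((θ * φ k j + ε k j ω) - θe k j ω * φ k j))) - ∑ j, A i j * θ := by
          rw [hrec k i ω, ← hθ]
      _ = ∑ j, A i j * ((θe k j ω +
            (φ k j / (1 + S (k+1) j)) *
              ((θ * φ k j + ε k j ω) - θe k j ω * φ k j)) - θ) := by
          rw [← Finset.sum_sub_distrib]
          exact Finset.sum_congr rfl fun j _ => by ring
      _ = ∑ j, A i j * (r k j * e k j ω + L k j * ε k j ω) := by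
          refine Finset.sum_congr rfl fun j _ => ?_
          congr 1
          have hpos := hS_pos (k+1) j
          rw [he_def, hr_def, hL_def]
          simp only
          rw [hS_succ k j] at hpos ⊢
          field_simp
          ring
  -- measurability and square-integrability of the errors
  have hθe_meas : ∀ k i, Measurable (fun ω => θe k i ω) := by
    intro k
    induction k with
    | zero =>
      intro i
      have : (fun ω => θe 0 i ω) = fun _ => θ0 i := funext fun ω => h0 i ω
      rw [this]; exact measurable_const
    | succ k ih =>
      intro i
      have : (fun ω => θe (k+1) i ω) = fun ω => ∑ j, A i j * (θe k j ω +
          (φ k j / (1 + ∑ t ∈ Finset.range (k + 1), (φ t j) ^ 2)) *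
            ((θ * φ k j + ε k j ω) - θe k j ω * φ k j)) := funext fun ω => hrec k i ω
      rw [this]
      refine Finset.measurable_sum _ fun j _ => Measurable.const_mul ?_ (A i j)
      refine Measurable.add (ih j) (Measurable.const_mul ?_ _)
      exact (measurable_const.add (hε_meas k j)).sub ((ih j).mul_const _)
  have he_meas : ∀ k i, Measurable (fun ω => e k i ω) := fun k i =>
    (hθe_meas k i).sub measurable_const
  have he_L2 : ∀ k i, MemLp (fun ω => e k i ω) 2 P := by
    intro k
    induction k with
    | zero =>
      intro i
      have : (fun ω => e 0 i ω) = fun _ => θ0 i - θ := by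
        funext ω; rw [he_def]; simp [h0 i ω]
      rw [this]; exact memLp_const _
    | succ k ih =>
      intro i
      have : (fun ω => e (k+1) i ω) =
          fun ω => ∑ j, A i j * (r k j * e k j ω + L k j * ε k j ω) :=
        funext fun ω => herec k i ω
      rw [this]
      refine memLp_finset_sum _ fun j _ => ?_
      exact (((ih j).const_mul _).add ((hε_L2 k j).const_mul _)).const_mul _
  have he_int : ∀ k i, Integrable (fun ω => e k i ω) P := fun k i =>
    (he_L2 k i).integrable one_le_two
  have he_sq_int : ∀ k i, Integrable (fun ω => e k i ω ^ 2) P := fun k i =>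
    (he_L2 k i).integrable_sq
  have hε_int : ∀ k i, Integrable (ε k i) P := fun k i =>
    (hε_L2 k i).integrable one_le_two
  have hε_sq_int : ∀ k i, Integrable (fun ω => ε k i ω ^ 2) P := fun k i =>
    (hε_L2 k i).integrable_sq
  -- product integrability via AM-GM
  have hprod_int : ∀ k k' i i', Integrable (fun ω => e k i ω * ε k' i' ω) P := by
    intro k k' i i'
    refine Integrable.mono' (((he_sq_int k i).add (hε_sq_int k' i')).div_const 2)
      ((he_meas k i).mul (hε_meas k' i')).aestronglyMeasurable ?_
    refine ae_of_all _ fun ω => ?_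
    simp only [Real.norm_eq_abs, Pi.add_apply]
    exact abs_mul_le_half_sq _ _
  -- history representation of the estimates
  have hhist : ∀ k i, ∃ g : (Fin k → Fin n → ℝ) → ℝ, Measurable g ∧
      ∀ ω, θe k i ω = g (fun t j => ε t j ω) := by
    intro k
    induction k with
    | zero =>
      intro i
      exact ⟨fun _ => θ0 i, measurable_const, fun ω => h0 i ω⟩
    | succ k ih =>
      intro i
      choose g hg_meas hg_eq using ih
      refine ⟨fun x => ∑ j, A i j * (g j (fun t j' => x t.castSucc j') +
          (φ k j / (1 + ∑ t ∈ Finset.range (k + 1), (φ t j) ^ 2)) *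
            ((θ * φ k j + x (Fin.last k) j) -
              g j (fun t j' => x t.castSucc j') * φ k j)), ?_, ?_⟩
      · refine Finset.measurable_sum _ fun j _ => Measurable.const_mul ?_ _
        have hg' : Measurable fun (x : Fin (k+1) → Fin n → ℝ) =>
            g j (fun t j' => x t.castSucc j') := by
          refine (hg_meas j).comp ?_
          refine measurable_pi_lambda _ fun t => ?_
          refine measurable_pi_lambda _ fun j' => ?_
          exact (measurable_pi_apply _).comp (measurable_pi_apply _)
        have hx : Measurable fun (x : Fin (k+1) → Fin n → ℝ) => x (Fin.last k) j :=
          (measurable_pi_apply _).comp (measurable_pi_apply _)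
        exact (hg'.add (((measurable_const.add hx).sub
          (hg'.mul_const _)).const_mul _))
      · intro ω
        rw [hrec k i ω]
        refine Finset.sum_congr rfl fun j _ => ?_
        have h1 : (fun (t : Fin k) (j' : Fin n) => ε (Fin.castSucc t) j' ω)
            = fun (t : Fin k) (j' : Fin n) => ε t j' ω := by
          funext t j'
          simp [Fin.coe_castSucc]
        rw [h1, ← hg_eq j ω]
        simp [Fin.val_last]
  -- independence of the error and the current noise
  have hindep : ∀ k j j', ProbabilityTheory.IndepFun (fun ω => e k j ω) (ε k j') P := by
    intro k j j'
    set F : ℕ → Ω → (Fin n → ℝ) := fun t ω i => ε t i ω with hF_def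
    have hF_meas : ∀ t, Measurable (F t) :=
      fun t => measurable_pi_lambda _ fun i => hε_meas t i
    have hdisj : Disjoint (Finset.range k) ({k} : Finset ℕ) := by
      simp [Finset.disjoint_singleton_right]
    have hIF := hε_indep.indepFun_finset (Finset.range k) {k} hdisj hF_meas
    obtain ⟨g, hg_meas, hg_eq⟩ := hhist k j
    have hkmem : (k : ℕ) ∈ ({k} : Finset ℕ) := Finset.mem_singleton_self k
    set φf : (↥(Finset.range k) → (Fin n → ℝ)) → ℝ := fun v =>
      g (fun t j'' => v ⟨(t : ℕ), Finset.mem_range.mpr t.isLt⟩ j'') - θ with hφf_def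
    set ψf : (↥({k} : Finset ℕ) → (Fin n → ℝ)) → ℝ := fun v => v ⟨k, hkmem⟩ j' with hψf_def
    have hφm : Measurable φf := by
      refine (hg_meas.comp ?_).sub measurable_const
      refine measurable_pi_lambda _ fun t => measurable_pi_lambda _ fun j'' => ?_
      exact (measurable_pi_apply _).comp (measurable_pi_apply _)
    have hψm : Measurable ψf := (measurable_pi_apply _).comp (measurable_pi_apply _)
    have hcomp := hIF.comp hφm hψm
    have h1 : (fun ω => e k j ω) =
        φf ∘ (fun (a : Ω) (t : ↥(Finset.range k)) => F (t : ℕ) a) := by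
      funext ω
      simp only [Function.comp_apply, hφf_def, he_def, hF_def]
      rw [hg_eq ω]
    have h2 : ε k j' = ψf ∘ (fun (a : Ω) (t : ↥({k} : Finset ℕ)) => F (t : ℕ) a) :=
      funext fun ω => rfl
    rw [h1, h2]
    exact hcomp
  -- cross moments vanish
  have hcross : ∀ k j, ∫ ω, e k j ω * ε k j ω ∂P = 0 := by
    intro k j
    rw [(hindep k j j).integral_fun_mul_eq_mul_integral (he_meas k j).aestronglyMeasurable
      (hε_meas k j).aestronglyMeasurable, hε_mean k j, mul_zero]
  -- integrands in the recursion are integrable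
  have hterm_int : ∀ k i j, Integrable
      (fun ω => A i j * (r k j * e k j ω + L k j * ε k j ω)) P := by
    intro k i j
    exact (((he_int k j).const_mul _).add ((hε_int k j).const_mul _)).const_mul _
  -- mean propagation
  have hmean : ∀ k i, ∫ ω, e k i ω ∂P = ∑ j, MM A r k i j * (θ0 j - θ) := by
    intro k
    induction k with
    | zero =>
      intro i
      have h1 : (fun ω => e 0 i ω) = fun _ => θ0 i - θ := by
        funext ω; rw [he_def]; simp [h0 i ω]
      rw [h1]
      simp [MM, Finset.sum_ite_eq, integral_const]
    | succ k ih =>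
      intro i
      have h1 : (fun ω => e (k+1) i ω) =
          fun ω => ∑ j, A i j * (r k j * e k j ω + L k j * ε k j ω) :=
        funext fun ω => herec k i ω
      rw [h1, integral_finset_sum _ fun j _ => hterm_int k i j]
      have h2 : ∀ j, ∫ ω, A i j * (r k j * e k j ω + L k j * ε k j ω) ∂P
          = A i j * (r k j * ∫ ω, e k j ω ∂P) := by
        intro j
        rw [integral_const_mul, integral_add ((he_int k j).const_mul _)
          ((hε_int k j).const_mul _), integral_const_mul, integral_const_mul,
          hε_mean k j, mul_zero, add_zero]
      simp only [h2]
      simp only [ih]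
      have hMM : ∀ i', MM A r (k+1) i i' = ∑ j, A i j * (r k j * MM A r k j i') :=
        fun i' => rfl
      simp only [hMM]
      simp only [Finset.mul_sum, Finset.sum_mul]
      rw [Finset.sum_comm]
      refine Finset.sum_congr rfl fun j _ => Finset.sum_congr rfl fun j' _ => by ring
  -- the weighted mean sum and its limit
  have hT_mean : ∀ k, (∑ i, ∫ ω, e k i ω ∂P) = ∑ j, cc A r k j * (θ0 j - θ) := by
    intro k
    simp only [hmean]
    rw [Finset.sum_comm]
    refine Finset.sum_congr rfl fun j _ => ?_
    rw [cc, Finset.sum_mul]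
  have hT_lim : Tendsto (fun k => ∑ j, cc A r k j * (θ0 j - θ)) atTop
      (𝓝 (∑ j, μ j * (θ0 j - θ))) := by
    refine tendsto_finset_sum _ fun j _ => ?_
    exact (hμ_tendsto j).mul_const _
  set s : ℝ := ∑ j, μ j * (θ0 j - θ) with hs_def
  have hn_pos : (0:ℝ) < n := by exact_mod_cast hn
  -- second moment of each error dominates square of mean
  have hsqmean : ∀ k i, (∫ ω, e k i ω ∂P) ^ 2 ≤ ∫ ω, e k i ω ^ 2 ∂P := by
    intro k i
    have hv := ProbabilityTheory.variance_nonneg (fun ω => e k i ω) P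
    rw [ProbabilityTheory.variance_eq_sub (he_L2 k i)] at hv
    simp only [Pi.pow_apply] at hv
    linarith
  -- lower bound for the total second moment in terms of the mean sum
  have hlow : ∀ k, ((∑ j, cc A r k j * (θ0 j - θ)) ^ 2) / n
      ≤ ∫ ω, ∑ i, (θe k i ω - θ) ^ 2 ∂P := by
    intro k
    have h1 : (∑ i, ∫ ω, e k i ω ∂P) ^ 2 ≤ n * ∑ i, (∫ ω, e k i ω ∂P) ^ 2 := by
      have := sq_sum_le_card_mul_sum_sq
        (s := (Finset.univ : Finset (Fin n))) (f := fun i => ∫ ω, e k i ω ∂P)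
      simpa using this
    have h2 : (∑ i, (∫ ω, e k i ω ∂P) ^ 2) ≤ ∑ i, ∫ ω, e k i ω ^ 2 ∂P :=
      Finset.sum_le_sum fun i _ => hsqmean k i
    have h3 : (∑ i, ∫ ω, e k i ω ^ 2 ∂P) = ∫ ω, ∑ i, (θe k i ω - θ) ^ 2 ∂P := by
      rw [← integral_finset_sum _ fun i _ => he_sq_int k i]
    rw [← hT_mean k, div_le_iff₀ hn_pos] at *
    calc (∑ i, ∫ ω, e k i ω ∂P) ^ 2 ≤ n * ∑ i, (∫ ω, e k i ω ∂P) ^ 2 := h1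
      _ ≤ n * ∑ i, ∫ ω, e k i ω ^ 2 ∂P := by
          exact mul_le_mul_of_nonneg_left h2 (le_of_lt hn_pos)
      _ = (∫ ω, ∑ i, (θe k i ω - θ) ^ 2 ∂P) * n := by rw [h3]; ring
  -- uniform bound on the total second moment
  set V : ℕ → ℝ := fun k => ∫ ω, ∑ i, e k i ω ^ 2 ∂P with hV_def
  have hV_nonneg : ∀ k, 0 ≤ V k := fun k =>
    integral_nonneg fun ω => Finset.sum_nonneg fun i _ => sq_nonneg _
  have hu_L2 : ∀ k j, MemLp (fun ω => r k j * e k j ω + L k j * ε k j ω) 2 P :=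
    fun k j => ((he_L2 k j).const_mul _).add ((hε_L2 k j).const_mul _)
  have hL_sq : ∀ k j, L k j ^ 2 ≤ φ k j ^ 2 := by
    intro k j
    rw [hL_def]
    rw [div_pow]
    have h1 : (1:ℝ) ≤ (1 + S (k+1) j) ^ 2 := by nlinarith [hS_nonneg (k+1) j]
    calc φ k j ^ 2 / (1 + S (k+1) j) ^ 2 ≤ φ k j ^ 2 / 1 := by
          refine div_le_div_of_nonneg_left (sq_nonneg _) one_pos h1
      _ = φ k j ^ 2 := div_one _
  have hV_step : ∀ k, V (k+1) ≤ V k + M * ∑ j, φ k j ^ 2 := by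
    intro k
    have hpt : ∀ ω, ∑ i, e (k+1) i ω ^ 2
        ≤ ∑ j, (r k j * e k j ω + L k j * ε k j ω) ^ 2 := by
      intro ω
      have h1 : ∀ i, e (k+1) i ω ^ 2
          ≤ ∑ j, A i j * (r k j * e k j ω + L k j * ε k j ω) ^ 2 := by
        intro i
        rw [herec k i ω]
        have := sq_sum_mul_le (s := Finset.univ) (fun j => A i j)
          (fun j => r k j * e k j ω + L k j * ε k j ω) (hA_nonneg i)
        rw [hA_row i, one_mul] at this
        exact this
      calc ∑ i, e (k+1) i ω ^ 2
          ≤ ∑ i, ∑ j, A i j * (r k j * e k j ω + L k j * ε k j ω) ^ 2 :=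
            Finset.sum_le_sum fun i _ => h1 i
        _ = ∑ j, (∑ i, A i j) * (r k j * e k j ω + L k j * ε k j ω) ^ 2 := by
            rw [Finset.sum_comm]
            exact Finset.sum_congr rfl fun j _ => by rw [Finset.sum_mul]
        _ = ∑ j, (r k j * e k j ω + L k j * ε k j ω) ^ 2 := by
            exact Finset.sum_congr rfl fun j _ => by rw [hA_col j, one_mul]
    have hint_l : Integrable (fun ω => ∑ i, e (k+1) i ω ^ 2) P :=
      integrable_finset_sum _ fun i _ => he_sq_int (k+1) i
    have hint_r : Integrable (fun ω => ∑ j, (r k j * e k j ω + L k j * ε k j ω) ^ 2) P :=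
      integrable_finset_sum _ fun j _ => (hu_L2 k j).integrable_sq
    have hmono := integral_mono hint_l hint_r hpt
    have hexp : ∀ j, ∫ ω, (r k j * e k j ω + L k j * ε k j ω) ^ 2 ∂P
        = r k j ^ 2 * ∫ ω, e k j ω ^ 2 ∂P + L k j ^ 2 * ∫ ω, ε k j ω ^ 2 ∂P := by
      intro j
      have h2 : (fun ω => (r k j * e k j ω + L k j * ε k j ω) ^ 2)
          = fun ω => r k j ^ 2 * e k j ω ^ 2
            + ((2 * r k j * L k j) * (e k j ω * ε k j ω) + L k j ^ 2 * ε k j ω ^ 2) := by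
        funext ω; ring
      have hbc : Integrable (fun ω => (2 * r k j * L k j) * (e k j ω * ε k j ω)
          + L k j ^ 2 * ε k j ω ^ 2) P := by
        exact ((hprod_int k k j j).const_mul _).add ((hε_sq_int k j).const_mul _)
      rw [h2, integral_add ((he_sq_int k j).const_mul _) hbc,
        integral_add ((hprod_int k k j j).const_mul _) ((hε_sq_int k j).const_mul _),
        integral_const_mul, integral_const_mul, integral_const_mul, hcross k j,
        mul_zero, zero_add]
    have hterm : ∀ j, ∫ ω, (r k j * e k j ω + L k j * ε k j ω) ^ 2 ∂P
        ≤ ∫ ω, e k j ω ^ 2 ∂P + M * φ k j ^ 2 := by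
      intro j
      rw [hexp j]
      have he2 : 0 ≤ ∫ ω, e k j ω ^ 2 ∂P := integral_nonneg fun ω => sq_nonneg _
      have hε2 : 0 ≤ ∫ ω, ε k j ω ^ 2 ∂P := integral_nonneg fun ω => sq_nonneg _
      have hr2 : r k j ^ 2 ≤ 1 := by nlinarith [hr0 k j, hr1 k j]
      have h3 : r k j ^ 2 * ∫ ω, e k j ω ^ 2 ∂P ≤ ∫ ω, e k j ω ^ 2 ∂P := by
        nlinarith [sq_nonneg (r k j)]
      have h4 : L k j ^ 2 * ∫ ω, ε k j ω ^ 2 ∂P ≤ φ k j ^ 2 * M := by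
        refine mul_le_mul (hL_sq k j) (le_of_lt (hε_var k j)) hε2 (sq_nonneg _)
      linarith
    calc V (k+1) ≤ ∫ ω, ∑ j, (r k j * e k j ω + L k j * ε k j ω) ^ 2 ∂P := hmono
      _ = ∑ j, ∫ ω, (r k j * e k j ω + L k j * ε k j ω) ^ 2 ∂P :=
          integral_finset_sum _ fun j _ => (hu_L2 k j).integrable_sq
      _ ≤ ∑ j, (∫ ω, e k j ω ^ 2 ∂P + M * φ k j ^ 2) :=
          Finset.sum_le_sum fun j _ => hterm j
      _ = (∑ j, ∫ ω, e k j ω ^ 2 ∂P) + M * ∑ j, φ k j ^ 2 := by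
          rw [Finset.sum_add_distrib, Finset.mul_sum]
      _ = V k + M * ∑ j, φ k j ^ 2 := by
          simp only [hV_def]
          rw [← integral_finset_sum _ fun j _ => he_sq_int k j]
  set C : ℝ := ∑' t, ∑ j, φ t j ^ 2 with hC_def
  have hC_nonneg : 0 ≤ C := tsum_nonneg fun t => Finset.sum_nonneg fun j _ => sq_nonneg _
  set B : ℝ := V 0 + M * C with hB_def
  have hB_nonneg : 0 ≤ B := by
    have := hV_nonneg 0
    nlinarith [hM, hC_nonneg]
  have hV_bound : ∀ k, V k ≤ B := by
    have haux : ∀ k, V k ≤ V 0 + M * ∑ t ∈ Finset.range k, ∑ j, φ t j ^ 2 := by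
      intro k
      induction k with
      | zero => simp
      | succ k ih =>
        calc V (k+1) ≤ V k + M * ∑ j, φ k j ^ 2 := hV_step k
          _ ≤ V 0 + M * (∑ t ∈ Finset.range k, ∑ j, φ t j ^ 2) + M * ∑ j, φ k j ^ 2 := by
              linarith
          _ = V 0 + M * ∑ t ∈ Finset.range (k+1), ∑ j, φ t j ^ 2 := by
              rw [Finset.sum_range_succ]; ring
    intro k
    refine le_trans (haux k) ?_
    rw [hB_def]
    have : (∑ t ∈ Finset.range k, ∑ j, φ t j ^ 2) ≤ C :=
      Summable.sum_le_tsum (Finset.range k) (fun t _ => Finset.sum_nonneg fun j _ => sq_nonneg _)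
        hφ_sum
    nlinarith [hM]
  -- limits of the mean sums
  have hs2_pos : 0 < s ^ 2 := by positivity
  have ht2_lim : Tendsto (fun k => (∑ j, cc A r k j * (θ0 j - θ)) ^ 2) atTop (𝓝 (s ^ 2)) :=
    hT_lim.pow 2
  have hev2 : ∀ᶠ k in atTop, s ^ 2 / 2 ≤ (∑ j, cc A r k j * (θ0 j - θ)) ^ 2 :=
    ht2_lim.eventually (eventually_ge_nhds (by linarith))
  constructor
  · -- first conclusion: liminf of expected squared error is positive
    refine ⟨s ^ 2 / (2 * n), by positivity, ?_⟩
    filter_upwards [hev2] with k hk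
    calc s ^ 2 / (2 * n) = (s ^ 2 / 2) / n := by ring
      _ ≤ ((∑ j, cc A r k j * (θ0 j - θ)) ^ 2) / n := by gcongr
      _ ≤ ∫ ω, ∑ i, (θe k i ω - θ) ^ 2 ∂P := hlow k
  · -- second conclusion: no convergence to 0 in probability
    intro hcon
    set X : ℕ → Ω → ℝ := fun k ω => Real.sqrt (∑ i, (θe k i ω - θ) ^ 2) with hX_def
    have hsum_nonneg : ∀ k ω, 0 ≤ ∑ i, (θe k i ω - θ) ^ 2 :=
      fun k ω => Finset.sum_nonneg fun i _ => sq_nonneg _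
    have hX_nonneg : ∀ k ω, 0 ≤ X k ω := fun k ω => Real.sqrt_nonneg _
    have hX_sq : ∀ k ω, X k ω ^ 2 = ∑ i, (θe k i ω - θ) ^ 2 :=
      fun k ω => Real.sq_sqrt (hsum_nonneg k ω)
    have hsum_meas : ∀ k, Measurable (fun ω => ∑ i, (θe k i ω - θ) ^ 2) :=
      fun k => Finset.measurable_sum _ fun i _ =>
        ((hθe_meas k i).sub measurable_const).pow_const 2
    have hX_meas : ∀ k, Measurable (X k) :=
      fun k => (hsum_meas k).sqrt
    have hsum_int : ∀ k, Integrable (fun ω => ∑ i, (θe k i ω - θ) ^ 2) P :=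
      fun k => integrable_finset_sum _ fun i _ => he_sq_int k i
    have hX_int : ∀ k, Integrable (X k) P := by
      intro k
      refine Integrable.mono' ((integrable_const 1).add (hsum_int k))
        (hX_meas k).aestronglyMeasurable ?_
      refine ae_of_all _ fun ω => ?_
      rw [Real.norm_eq_abs, abs_of_nonneg (hX_nonneg k ω)]
      exact sqrt_le_one_add _ (hsum_nonneg k ω)
    -- |sum of errors| ≤ √n · X
    have hTX : ∀ k ω, |∑ i, e k i ω| ≤ Real.sqrt n * X k ω := by
      intro k ω
      have h1 : (∑ i, e k i ω) ^ 2 ≤ n * ∑ i, (θe k i ω - θ) ^ 2 := by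
        have := sq_sum_le_card_mul_sum_sq
          (s := (Finset.univ : Finset (Fin n))) (f := fun i => e k i ω)
        simpa using this
      have h2 : |∑ i, e k i ω| = Real.sqrt ((∑ i, e k i ω) ^ 2) :=
        (Real.sqrt_sq_eq_abs _).symm
      rw [h2, hX_def]
      rw [show Real.sqrt n * Real.sqrt (∑ i, (θe k i ω - θ) ^ 2)
          = Real.sqrt (n * ∑ i, (θe k i ω - θ) ^ 2) from
        (Real.sqrt_mul (Nat.cast_nonneg n) _).symm]
      exact Real.sqrt_le_sqrt h1
    have hsqrtn_pos : 0 < Real.sqrt n := Real.sqrt_pos.mpr hn_pos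
    -- lower bound on E X k
    have hEX : ∀ k, |∑ j, cc A r k j * (θ0 j - θ)| / Real.sqrt n ≤ ∫ ω, X k ω ∂P := by
      intro k
      rw [div_le_iff₀ hsqrtn_pos]
      have h1 : |∑ j, cc A r k j * (θ0 j - θ)| = |∫ ω, ∑ i, e k i ω ∂P| := by
        rw [← hT_mean k, ← integral_finset_sum _ fun i _ => he_int k i]
      rw [h1]
      calc |∫ ω, ∑ i, e k i ω ∂P| ≤ ∫ ω, |∑ i, e k i ω| ∂P := by
            simpa [Real.norm_eq_abs] using
              norm_integral_le_integral_norm (μ := P) (fun ω => ∑ i, e k i ω)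
        _ ≤ ∫ ω, Real.sqrt n * X k ω ∂P := by
            refine integral_mono ((integrable_finset_sum _ fun i _ => he_int k i).abs)
              ((hX_int k).const_mul _) ?_
            exact fun ω => hTX k ω
        _ = Real.sqrt n * ∫ ω, X k ω ∂P := integral_const_mul _ _
        _ = (∫ ω, X k ω ∂P) * Real.sqrt n := by ring
    -- choose the truncation level
    set κ : ℝ := |s| / (4 * Real.sqrt n) with hκ_def
    have hs_abs : 0 < |s| := abs_pos.mpr hs
    have hκ_pos : 0 < κ := by positivity
    set b : ℝ := B / κ + 1 with hb_def
    have hb_pos : 0 < b := by positivity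
    have hBb : B / b ≤ κ := by
      rw [div_le_iff₀ hb_pos, hb_def]
      have : κ * (B / κ + 1) = B + κ := by field_simp
      rw [this]; linarith
    set Y : ℕ → Ω → ℝ := fun k ω => min (X k ω) b with hY_def
    have hY_nonneg : ∀ k ω, 0 ≤ Y k ω := fun k ω => le_min (hX_nonneg k ω) hb_pos.le
    have hY_le_b : ∀ k ω, Y k ω ≤ b := fun k ω => min_le_right _ _
    have hY_le_X : ∀ k ω, Y k ω ≤ X k ω := fun k ω => min_le_left _ _
    have hY_meas : ∀ k, Measurable (Y k) := fun k => (hX_meas k).min measurable_const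
    have hY_int : ∀ k, Integrable (Y k) P := by
      intro k
      refine Integrable.mono' (integrable_const b) (hY_meas k).aestronglyMeasurable ?_
      refine ae_of_all _ fun ω => ?_
      rw [Real.norm_eq_abs, abs_of_nonneg (hY_nonneg k ω)]
      exact hY_le_b k ω
    -- E Y is eventually at least κ
    have hXY : ∀ k, ∫ ω, X k ω ∂P - B / b ≤ ∫ ω, Y k ω ∂P := by
      intro k
      have hpt : ∀ ω, X k ω - Y k ω ≤ (∑ i, (θe k i ω - θ) ^ 2) / b := by
        intro ω
        rw [← hX_sq k ω]
        rcases le_or_gt (X k ω) b with h | h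
        · rw [hY_def]
          simp only [min_eq_left h, sub_self]
          positivity
        · rw [hY_def]
          simp only [min_eq_right h.le]
          have hXb : b ≤ X k ω := h.le
          have hX0 := hX_nonneg k ω
          rw [le_div_iff₀ hb_pos]
          nlinarith
      have h2 : ∫ ω, (X k ω - Y k ω) ∂P ≤ ∫ ω, (∑ i, (θe k i ω - θ) ^ 2) / b ∂P :=
        integral_mono ((hX_int k).sub (hY_int k)) ((hsum_int k).div_const b) hpt
      rw [integral_sub (hX_int k) (hY_int k), integral_div] at h2
      have h3 : (∫ ω, ∑ i, (θe k i ω - θ) ^ 2 ∂P) / b ≤ B / b := by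
        exact (div_le_div_iff_of_pos_right hb_pos).mpr (hV_bound k)
      linarith
    have habs_lim : Tendsto (fun k => |∑ j, cc A r k j * (θ0 j - θ)|) atTop (𝓝 |s|) :=
      hT_lim.abs
    have hev3 : ∀ᶠ k in atTop, |s| / 2 ≤ |∑ j, cc A r k j * (θ0 j - θ)| :=
      habs_lim.eventually (eventually_ge_nhds (by linarith))
    have hevY : ∀ᶠ k in atTop, κ ≤ ∫ ω, Y k ω ∂P := by
      filter_upwards [hev3] with k hk
      have h1 : |s| / 2 / Real.sqrt n ≤ ∫ ω, X k ω ∂P := by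
        refine le_trans ?_ (hEX k)
        gcongr
      have h2 : |s| / 2 / Real.sqrt n = 2 * κ := by
        rw [hκ_def]; field_simp; ring
      have h3 := hXY k
      rw [h2] at h1
      linarith [hBb]
    -- Y tends to 0 in measure, hence so do its integrals along a subsequence
    have hYtim : TendstoInMeasure P Y atTop (fun _ => (0:ℝ)) := by
      intro δ' hδ'
      have hsub : ∀ k, {ω | δ' ≤ edist (Y k ω) 0} ⊆ {ω | δ' ≤ edist (X k ω) 0} := by
        intro k ω hω
        simp only [Set.mem_setOf_eq] at hω ⊢
        refine le_trans hω ?_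
        rw [edist_dist, edist_dist, Real.dist_0_eq_abs, Real.dist_0_eq_abs]
        refine ENNReal.ofReal_le_ofReal ?_
        rw [abs_of_nonneg (hY_nonneg k ω), abs_of_nonneg (hX_nonneg k ω)]
        exact hY_le_X k ω
      have h0le : ∀ k, (0:ENNReal) ≤ P {ω | δ' ≤ edist (Y k ω) 0} := fun k => zero_le
      refine tendsto_of_tendsto_of_tendsto_of_le_of_le tendsto_const_nhds
        (hcon δ' hδ') h0le fun k => measure_mono (hsub k)
    obtain ⟨ns, hns_mono, hns_ae⟩ := hYtim.exists_seq_tendsto_ae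
    have hY_lim : Tendsto (fun k => ∫ ω, Y (ns k) ω ∂P) atTop (𝓝 0) := by
      have h0 : (0:ℝ) = ∫ (_ : Ω), (0:ℝ) ∂P := by simp
      rw [h0]
      refine tendsto_integral_of_dominated_convergence (fun _ => b)
        (fun k => (hY_meas (ns k)).aestronglyMeasurable) (integrable_const b)
        (fun k => ae_of_all _ fun ω => ?_) ?_
      · rw [Real.norm_eq_abs, abs_of_nonneg (hY_nonneg (ns k) ω)]
        exact hY_le_b (ns k) ω
      · filter_upwards [hns_ae] with ω hω
        exact hω
    have hns_top : Tendsto ns atTop atTop := hns_mono.tendsto_atTop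
    have hevY' : ∀ᶠ k in atTop, κ ≤ ∫ ω, Y (ns k) ω ∂P :=
      hns_top.eventually hevY
    have : κ ≤ 0 := ge_of_tendsto hY_lim hevY'
    linarith
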